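/- Let v : 2^M → ℝ≥0 be a monotone α-submodular valuation (α ≥ 1) that is ε-close to a linear valuation ℓ(S) = c + Σ_{j∈S} l_j. Let X = (x_1, …, x_k) be a sequence of distinct items and Z ⊆ M a set disjoint from {x_1,…,x_k}, and write X_j := {x_1, …, x_{j−1}}. Let Y_1, …, Y_k be sets with Y_j ⊆ X_j ∪ Z for every j. Then α·Σ_{j=1}^{k} v(x_j | Y_j) ≥ Σ_{j=1}^{k} l_{x_j} − ε·ℓ(Z). -/

import Mathlib

/-- The prefix `{x_1, …, x_{j-1}}` of a finite sequence `x : Fin k → M`. -/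
def prefixSet {M : Type*} [DecidableEq M] {k : ℕ} (x : Fin k → M) (j : Fin k) :
    Finset M :=
  (Finset.univ.filter (fun i : Fin k => i < j)).image x

/-- Lemma relating sums of marginals to the linear contribution.
Let `v` be a monotone `α`-submodular valuation (`α ≥ 1`) that is `ε`-close to the
linear valuation `ℓ(S) = c + Σ_{j∈S} l j`.  Let `x_1, …, x_k` be distinct items,
`Z` disjoint from `{x_1,…,x_k}`, and `Y_j ⊆ X_j ∪ Z` where `X_j = {x_1,…,x_{j−1}}`.
Then `α·Σ_j v(x_j | Y_j) ≥ Σ_j l(x_j) − ε·ℓ(Z)`. -/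
theorem sum_marginals_ge_linear_sub_error
    {M : Type*} [Fintype M] [DecidableEq M]
    (α ε : ℝ) (hα : 1 ≤ α) (hε : 0 ≤ ε)
    (v : Finset M → ℝ)
    (hv : ∀ S : Finset M, 0 ≤ v S)
    (hmono : ∀ S T : Finset M, S ⊆ T → v S ≤ v T)
    (hsub : ∀ S T : Finset M, S ⊆ T → ∀ j : M, j ∉ T →
      α * (v (insert j S) - v S) ≥ v (insert j T) - v T)
    (c : ℝ) (hc : 0 ≤ c) (l : M → ℝ) (hl : ∀ j : M, 0 ≤ l j)
    (ℓ : Finset M → ℝ) (hℓ : ∀ S : Finset M, ℓ S = c + ∑ j ∈ S, l j)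
    (hclose : ∀ S : Finset M, ℓ S ≤ v S ∧ v S ≤ (1 + ε) * ℓ S)
    (k : ℕ) (x : Fin k → M) (hinj : Function.Injective x)
    (Z : Finset M) (hdisj : ∀ i : Fin k, x i ∉ Z)
    (Y : Fin k → Finset M)
    (hY : ∀ j : Fin k, Y j ⊆ prefixSet x j ∪ Z) :
    α * ∑ j : Fin k, (v (insert (x j) (Y j)) - v (Y j)) ≥
      (∑ j : Fin k, l (x j)) - ε * ℓ Z := by
  classical
  set g : ℕ → Finset M := fun n =>
    ((Finset.univ.filter (fun i : Fin k => (i : ℕ) < n)).image x) ∪ Z with hg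
  have hg0 : g 0 = Z := by
    simp [hg]
  have hgW : ∀ j : Fin k, g j = prefixSet x j ∪ Z := by
    intro j
    simp only [hg, prefixSet, Fin.lt_def]
  have hgx : ∀ j : Fin k, x j ∉ g j := by
    intro j hmem
    rw [hgW j] at hmem
    rcases Finset.mem_union.1 hmem with h | h
    · rcases Finset.mem_image.1 h with ⟨i, hi, hix⟩
      have := hinj hix
      simp only [Finset.mem_filter] at hi
      exact absurd (this ▸ hi.2) (lt_irrefl j)
    · exact hdisj j h
  have hgsucc : ∀ j : Fin k, g ((j : ℕ) + 1) = insert (x j) (g j) := by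
    intro j
    simp only [hg]
    rw [← Finset.insert_union]
    congr 1
    have : (Finset.univ.filter (fun i : Fin k => (i : ℕ) < (j : ℕ) + 1)) =
        insert j (Finset.univ.filter (fun i : Fin k => (i : ℕ) < (j : ℕ))) := by
      ext i
      simp only [Finset.mem_filter, Finset.mem_insert, Finset.mem_univ, true_and, Fin.ext_iff]
      omega
    rw [this, Finset.image_insert]
  -- Step 1: each term dominates the marginal on g j
  have hterm : ∀ j : Fin k,
      α * (v (insert (x j) (Y j)) - v (Y j)) ≥ v (g ((j : ℕ) + 1)) - v (g j) := by
    intro j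
    rw [hgsucc j]
    exact hsub (Y j) (g j) (by rw [hgW j]; exact hY j) (x j) (hgx j)
  have hsum1 : α * ∑ j : Fin k, (v (insert (x j) (Y j)) - v (Y j)) ≥
      ∑ j : Fin k, (v (g ((j : ℕ) + 1)) - v (g j)) := by
    rw [Finset.mul_sum]
    exact Finset.sum_le_sum fun j _ => hterm j
  -- Step 2: telescoping
  have htel : ∑ j : Fin k, (v (g ((j : ℕ) + 1)) - v (g j)) = v (g k) - v Z := by
    rw [Fin.sum_univ_eq_sum_range (fun n => v (g (n + 1)) - v (g n)) k,
      Finset.sum_range_sub (fun n => v (g n)), hg0]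
  -- Step 3: bound v (g k) - v Z from below
  have hPk : (Finset.univ.filter (fun i : Fin k => (i : ℕ) < k)) = Finset.univ := by
    ext i; simp [i.isLt]
  have hgk : g k = (Finset.univ.image x) ∪ Z := by
    simp [hg, hPk]
  have hdisj' : Disjoint (Finset.univ.image x) Z := by
    rw [Finset.disjoint_left]
    intro a ha haZ
    rcases Finset.mem_image.1 ha with ⟨i, _, rfl⟩
    exact hdisj i haZ
  have hsumim : ∑ j ∈ Finset.univ.image x, l j = ∑ j : Fin k, l (x j) :=
    Finset.sum_image fun a _ b _ h => hinj h
  have hlb : v (g k) - v Z ≥ (∑ j : Fin k, l (x j)) - ε * ℓ Z := by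
    have h1 : ℓ (g k) ≤ v (g k) := (hclose (g k)).1
    have h2 : v Z ≤ (1 + ε) * ℓ Z := (hclose Z).2
    have h3 : ℓ (g k) = (∑ j : Fin k, l (x j)) + ℓ Z := by
      rw [hℓ, hℓ, hgk, Finset.sum_union hdisj', hsumim]
      ring
    nlinarith [h1, h2, h3]
  linarith [hsum1, htel ▸ hsum1, hlb]
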